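/- arXiv:1411.4684 — 2 statements merged into one kernel-verified Lean document; each statement's English description precedes it below -/
import Mathlib

section
/- For locally finite Borel measures μ on X and ν on Y, the product measure satisfies dim_*(μ ⊗ ν) ≥ dim_* μ + dim_* ν, where the product space X × Y carries the max metric. -/
open MeasureTheory
open scoped ENNReal

/-- The lower Hausdorff dimension of a measure:
`dim_* μ = inf {dim_H A : A Borel, μ(A) > 0}`. -/
noncomputable def lowerDim {X : Type*} [EMetricSpace X] [MeasurableSpace X]
    (μ : Measure X) : ℝ≥0∞ :=
  ⨅ (A : Set X) (_ : MeasurableSet A) (_ : 0 < μ A), dimH A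

open Set Metric Filter
open scoped NNReal Topology

section Aux

variable {Z : Type*} [MetricSpace Z] [SecondCountableTopology Z]
  [MeasurableSpace Z] [BorelSpace Z]

/-- If a set has Hausdorff dimension strictly below `lowerDim μ`, it is `μ`-null. -/
lemma measure_eq_zero_of_dimH_lt_lowerDim (μ : Measure Z) {E : Set Z}
    (h : dimH E < lowerDim μ) : μ E = 0 := by
  obtain ⟨d, hd1, hd2⟩ := ENNReal.lt_iff_exists_nnreal_btwn.1 h
  have h0 : μH[(d : ℝ)] E = 0 := hausdorffMeasure_of_dimH_lt hd1
  obtain ⟨G, hEG, hGm, hG0⟩ := exists_measurable_superset_of_null h0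
  by_contra hne
  have hpos : 0 < μ G :=
    lt_of_lt_of_le (pos_iff_ne_zero.2 hne) (measure_mono hEG)
  have h1 : lowerDim μ ≤ dimH G :=
    iInf_le_of_le G (iInf_le_of_le hGm (iInf_le _ hpos))
  have h2 : dimH G ≤ (d : ℝ≥0∞) :=
    dimH_le_of_hausdorffMeasure_ne_top (by rw [hG0]; exact ENNReal.zero_ne_top)
  exact absurd (h1.trans h2) (not_le.2 hd2)

/-- The set of points near which `μ` satisfies a Frostman-type bound with
exponent `s`, constant `m` and scale `1/(n+1)`. -/
def goodAt (μ : Measure Z) (s : ℝ) (n m : ℕ) : Set Z :=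
  {x | ∀ r : ℝ, 0 < r → r ≤ 1 / (n + 1) →
    μ (closedBall x r) ≤ (m : ℝ≥0∞) * ENNReal.ofReal r ^ s}

/-- The set of points where arbitrarily small closed balls have abnormally
large measure has Hausdorff dimension at most `s`. -/
lemma dimH_bad_le (μ : Measure Z) [IsLocallyFiniteMeasure μ] (s : ℝ≥0) :
    dimH {x : Z | ∀ n : ℕ, ∃ r : ℝ, 0 < r ∧ r ≤ 1 / (n + 1) ∧
      ENNReal.ofReal r ^ (s : ℝ) < μ (closedBall x r)} ≤ (s : ℝ≥0∞) := by
  set E := {x : Z | ∀ n : ℕ, ∃ r : ℝ, 0 < r ∧ r ≤ 1 / (n + 1) ∧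
      ENNReal.ofReal r ^ (s : ℝ) < μ (closedBall x r)} with hE
  -- reduce to sets of finite measure
  have key : ∀ U : Set Z, IsOpen U → μ U ≠ ∞ → dimH (E ∩ U) ≤ (s : ℝ≥0∞) := by
    intro U hUo hUfin
    -- Vitali families at every scale
    set T : ℕ → Set (Z × ℝ) := fun k =>
      {p : Z × ℝ | p.1 ∈ E ∩ U ∧ 0 < p.2 ∧ p.2 ≤ 1 / ((k : ℝ) + 1) ∧
        closedBall p.1 p.2 ⊆ U ∧ ENNReal.ofReal p.2 ^ (s : ℝ) < μ (closedBall p.1 p.2)}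
      with hT
    have hVit : ∀ k : ℕ, ∃ u ⊆ T k,
        (u.PairwiseDisjoint fun p : Z × ℝ => closedBall p.1 p.2) ∧
        ∀ p ∈ T k, ∃ b ∈ u, closedBall p.1 p.2 ⊆ closedBall b.1 (4 * b.2) := by
      intro k
      exact Vitali.exists_disjoint_subfamily_covering_enlargement_closedBall (T k)
        (fun p => p.1) (fun p => p.2) (1 / ((k : ℝ) + 1)) (fun p hp => hp.2.2.1) 4 (by norm_num)
    choose u hu_sub hu_disj hu_cover using hVit
    have hu_count : ∀ k, (u k).Countable := by
      intro k
      refine (hu_disj k).countable_of_nonempty_interior fun p hp => ?_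
      exact ⟨p.1, ball_subset_interior_closedBall (mem_ball_self (hu_sub k hp).2.1)⟩
    haveI : ∀ k, Countable (u k) := fun k => (hu_count k).to_subtype
    have hcover : ∀ k, E ∩ U ⊆ ⋃ i : u k, closedBall i.1.1 (4 * i.1.2) := by
      intro k z hz
      obtain ⟨ε, hε0, hεU⟩ := Metric.isOpen_iff.1 hUo z hz.2
      obtain ⟨n, hn⟩ : ∃ n : ℕ, (1 : ℝ) / (n + 1) < min (1 / ((k:ℝ) + 1)) (ε / 2) := by
        have hmin : (0:ℝ) < min (1 / ((k:ℝ) + 1)) (ε / 2) :=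
          lt_min (by positivity) (by positivity)
        exact exists_nat_one_div_lt hmin
      obtain ⟨r, hr0, hrle, hrμ⟩ := hz.1 n
      have hrk : r ≤ 1 / (k + 1) := hrle.trans (hn.le.trans (min_le_left _ _))
      have hrε : r < ε := lt_of_le_of_lt (hrle.trans (hn.le.trans (min_le_right _ _)))
        (by linarith)
      have hmem : (z, r) ∈ T k :=
        ⟨hz, hr0, hrk, (closedBall_subset_ball hrε).trans hεU, hrμ⟩
      obtain ⟨b, hbu, hbsub⟩ := hu_cover k (z, r) hmem
      exact Set.mem_iUnion.2 ⟨⟨b, hbu⟩, hbsub (mem_closedBall_self hr0.le)⟩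
    have hsum : ∀ k, (∑' i : u k,
        EMetric.diam (closedBall i.1.1 (4 * i.1.2)) ^ (s : ℝ)) ≤
        (8 : ℝ≥0∞) ^ (s : ℝ) * μ U := by
      intro k
      have h1 : ∀ i : u k, EMetric.diam (closedBall i.1.1 (4 * i.1.2)) ^ (s : ℝ)
          ≤ (8 : ℝ≥0∞) ^ (s : ℝ) * μ (closedBall i.1.1 i.1.2) := by
        rintro ⟨p, hp⟩
        obtain ⟨-, hr0, -, -, hμ⟩ := hu_sub k hp
        have hd : EMetric.diam (closedBall p.1 (4 * p.2)) ≤ ENNReal.ofReal (8 * p.2) := by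
          rw [← Metric.emetric_closedBall (by positivity : (0:ℝ) ≤ 4 * p.2)]
          refine (EMetric.diam_closedBall).trans (le_of_eq ?_)
          rw [show (8 : ℝ) * p.2 = 2 * (4 * p.2) by ring,
            ENNReal.ofReal_mul (by norm_num : (0:ℝ) ≤ 2)]
          norm_num

        calc EMetric.diam (closedBall p.1 (4 * p.2)) ^ (s : ℝ)
            ≤ ENNReal.ofReal (8 * p.2) ^ (s : ℝ) := by gcongr
          _ = (8 : ℝ≥0∞) ^ (s : ℝ) * ENNReal.ofReal p.2 ^ (s : ℝ) := by
              rw [ENNReal.ofReal_mul (by norm_num), ENNReal.mul_rpow_of_nonneg _ _ s.coe_nonneg]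
              norm_num
          _ ≤ (8 : ℝ≥0∞) ^ (s : ℝ) * μ (closedBall p.1 p.2) :=
              mul_le_mul_right hμ.le _
      calc (∑' i : u k, EMetric.diam (closedBall i.1.1 (4 * i.1.2)) ^ (s : ℝ))
          ≤ ∑' i : u k, (8 : ℝ≥0∞) ^ (s : ℝ) * μ (closedBall i.1.1 i.1.2) :=
            ENNReal.tsum_le_tsum h1
        _ = (8 : ℝ≥0∞) ^ (s : ℝ) * ∑' i : u k, μ (closedBall i.1.1 i.1.2) :=
            ENNReal.tsum_mul_left
        _ = (8 : ℝ≥0∞) ^ (s : ℝ) * μ (⋃ p ∈ u k, closedBall p.1 p.2) := by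
            rw [measure_biUnion (hu_count k) (hu_disj k)
              (fun p _ => measurableSet_closedBall)]
        _ ≤ (8 : ℝ≥0∞) ^ (s : ℝ) * μ U := by
            gcongr
            exact Set.iUnion₂_subset fun p hp => (hu_sub k hp).2.2.2.1
    -- conclude via hausdorffMeasure_le_liminf_tsum
    have hμH : μH[(s : ℝ)] (E ∩ U) ≤ (8 : ℝ≥0∞) ^ (s : ℝ) * μ U := by
      have hr : Tendsto (fun k : ℕ => ENNReal.ofReal (8 / (k + 1))) atTop (𝓝 0) := by
        rw [show (0 : ℝ≥0∞) = ENNReal.ofReal 0 by simp]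
        refine (ENNReal.continuous_ofReal.tendsto 0).comp ?_
        have := tendsto_one_div_add_atTop_nhds_zero_nat (𝕜 := ℝ)
        have h8 : Tendsto (fun k : ℕ => 8 * (1 / ((k : ℝ) + 1))) atTop (𝓝 (8 * 0)) :=
          this.const_mul 8
        simpa [div_eq_mul_inv] using h8
      refine (Measure.hausdorffMeasure_le_liminf_tsum (ι := fun k => ↥(u k)) (s : ℝ) (E ∩ U)
        (fun k : ℕ => ENNReal.ofReal (8 / (k + 1)))
        hr (fun k (i : ↥(u k)) => closedBall i.1.1 (4 * i.1.2)) ?_ ?_).trans ?_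
      · refine Filter.Eventually.of_forall fun k => ?_
        rintro ⟨p, hp⟩
        obtain ⟨-, hr0, hrk, -, -⟩ := hu_sub k hp
        show EMetric.diam (closedBall p.1 (4 * p.2)) ≤ ENNReal.ofReal (8 / ((k:ℝ) + 1))
        rw [← Metric.emetric_closedBall (by positivity : (0:ℝ) ≤ 4 * p.2)]
        refine (EMetric.diam_closedBall).trans ?_
        rw [show (2 : ℝ≥0∞) = ENNReal.ofReal 2 by simp]
        rw [← ENNReal.ofReal_mul (by norm_num)]
        apply ENNReal.ofReal_le_ofReal
        have : (0:ℝ) < (k:ℝ) + 1 := by positivity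
        rw [one_div] at hrk
        rw [div_eq_mul_inv, mul_comm (8:ℝ)]
        linarith
      · exact Filter.Eventually.of_forall hcover
      · refine liminf_le_of_frequently_le' (Filter.Frequently.of_forall fun k => hsum k)
    exact dimH_le_of_hausdorffMeasure_ne_top
      (ne_top_of_le_ne_top (ENNReal.mul_ne_top
        (ENNReal.rpow_ne_top_of_nonneg s.coe_nonneg (by norm_num)) hUfin) hμH)
  -- countable cover by finite measure open sets
  have hex : ∀ x : Z, ∃ U : Set Z, x ∈ U ∧ IsOpen U ∧ μ U < ∞ := fun x =>
    μ.exists_isOpen_measure_lt_top x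
  choose U hUmem hUo hUfin using hex
  obtain ⟨c, hc_count, hc_cover⟩ :=
    TopologicalSpace.countable_cover_nhds (fun x => (hUo x).mem_nhds (hUmem x))
  have hEsub : E ⊆ ⋃ x ∈ c, E ∩ U x := by
    intro z hz
    have : z ∈ ⋃ x ∈ c, U x := hc_cover ▸ Set.mem_univ z
    obtain ⟨x, hx, hzx⟩ := Set.mem_iUnion₂.1 this
    exact Set.mem_iUnion₂.2 ⟨x, hx, hz, hzx⟩
  refine (dimH_mono hEsub).trans ?_
  rw [dimH_bUnion hc_count]
  exact iSup₂_le fun x _ => key (U x) (hUo x) (hUfin x).ne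

/-- Almost every point is "good": Frostman-type bound at small scales. -/
lemma good_ae (μ : Measure Z) [IsLocallyFiniteMeasure μ] {s : ℝ≥0}
    (hs : (s : ℝ≥0∞) < lowerDim μ ∨ s = 0) :
    μ {x : Z | ∀ n m : ℕ, x ∉ goodAt μ (s : ℝ) n m} = 0 := by
  rcases hs with hs | rfl
  · -- contained in the bad set of `dimH_bad_le`
    refine measure_mono_null (fun x hx => ?_) (measure_eq_zero_of_dimH_lt_lowerDim μ
      (lt_of_le_of_lt (dimH_bad_le μ s) hs))
    intro n
    have := hx n 1
    simp only [goodAt, Set.mem_setOf_eq, not_forall] at this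
    obtain ⟨r, hr0, hrle, hgt⟩ := this
    exact ⟨r, hr0, hrle, by simpa using not_le.1 hgt⟩
  · -- s = 0 : every point is good
    have hempty : {x : Z | ∀ n m : ℕ, x ∉ goodAt μ ((0:ℝ≥0) : ℝ) n m} = ∅ := by
      refine Set.eq_empty_iff_forall_notMem.2 fun x hx => ?_
      obtain ⟨V, hxV, hVo, hVfin⟩ := μ.exists_isOpen_measure_lt_top x
      obtain ⟨ε, hε0, hεV⟩ := Metric.isOpen_iff.1 hVo x hxV
      obtain ⟨n, hn⟩ := exists_nat_one_div_lt hε0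
      obtain ⟨m, hm⟩ := ENNReal.exists_nat_gt hVfin.ne
      refine hx n m fun r hr0 hrle => ?_
      have hsub : closedBall x r ⊆ V := by
        refine (closedBall_subset_ball ?_).trans hεV
        exact lt_of_le_of_lt hrle hn
      calc μ (closedBall x r) ≤ μ V := measure_mono hsub
        _ ≤ (m : ℝ≥0∞) := hm.le
        _ = (m : ℝ≥0∞) * ENNReal.ofReal r ^ ((0 : ℝ≥0) : ℝ) := by
            simp [ENNReal.rpow_zero]
    rw [hempty]
    exact measure_empty

end Aux

section Mass

variable {Z : Type*} [MetricSpace Z] [MeasurableSpace Z] [BorelSpace Z]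

/-- Mass distribution principle. -/
lemma le_dimH_of_massbound (lam : Measure Z) (S : Set Z) (d : ℝ≥0) (hd : 0 < d)
    (c : ℝ≥0∞) (hc : c ≠ ∞) (r0 : ℝ) (hr0 : 0 < r0)
    (hball : ∀ z ∈ S, ∀ r : ℝ, 0 < r → r ≤ r0 →
      lam (closedBall z r) ≤ c * ENNReal.ofReal r ^ (d : ℝ))
    (hS : lam S ≠ 0) : (d : ℝ≥0∞) ≤ dimH S := by
  -- limit lemma for degenerate (diameter zero) pieces
  have hlim : ∀ (a : ℝ≥0∞), (∀ r : ℝ, 0 < r → r ≤ r0 → a ≤ c * ENNReal.ofReal r ^ (d : ℝ)) →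
      a = 0 := by
    intro a ha
    have htend : Tendsto (fun r : ℝ => c * ENNReal.ofReal r ^ (d : ℝ)) (𝓝[>] (0:ℝ)) (𝓝 0) := by
      have h1 : Tendsto (fun r : ℝ => ENNReal.ofReal r) (𝓝[>] (0:ℝ)) (𝓝 0) := by
        rw [show (0 : ℝ≥0∞) = ENNReal.ofReal 0 by simp]
        exact (ENNReal.continuous_ofReal.tendsto 0).mono_left nhdsWithin_le_nhds
      have h2 : Tendsto (fun r : ℝ => ENNReal.ofReal r ^ (d : ℝ)) (𝓝[>] (0:ℝ)) (𝓝 0) := by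
        have := (ENNReal.continuous_rpow_const (y := (d : ℝ))).tendsto 0
        rw [ENNReal.zero_rpow_of_pos (by exact_mod_cast hd)] at this
        exact this.comp h1
      have h3 := ENNReal.Tendsto.const_mul h2 (Or.inr hc)
      simpa using h3
    have : a ≤ 0 := by
      refine ge_of_tendsto htend ?_
      have hIoc : Set.Ioc (0:ℝ) r0 ∈ 𝓝[>] (0:ℝ) := Ioc_mem_nhdsGT_of_mem ⟨le_refl 0, hr0⟩
      filter_upwards [hIoc] with r hr
      exact ha r hr.1 hr.2
    simpa using this
  refine le_dimH_of_hausdorffMeasure_ne_zero (s := S) (d := d) ?_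
  have hmain : lam S / c ≤ μH[(d : ℝ)] S := by
    rw [Measure.hausdorffMeasure_apply]
    refine le_trans ?_ (le_iSup₂ (f := fun (r : ℝ≥0∞) (_ : 0 < r) =>
      ⨅ (t : ℕ → Set Z) (_ : S ⊆ ⋃ n, t n) (_ : ∀ n, EMetric.diam (t n) ≤ r),
        ∑' n, ⨆ _ : (t n).Nonempty, EMetric.diam (t n) ^ (d : ℝ))
      (ENNReal.ofReal r0) (ENNReal.ofReal_pos.2 hr0))
    refine le_iInf fun t => le_iInf fun hcov => le_iInf fun hdiam => ?_
    have hkey : ∀ n : ℕ, lam (t n ∩ S) ≤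
        c * ⨆ _ : (t n).Nonempty, EMetric.diam (t n) ^ (d : ℝ) := by
      intro n
      rcases (t n ∩ S).eq_empty_or_nonempty with hemp | ⟨z, hzt, hzS⟩
      · simp [hemp]
      have hne : (t n).Nonempty := ⟨z, hzt⟩
      rw [iSup_pos hne]
      have hDle : EMetric.diam (t n) ≤ ENNReal.ofReal r0 := hdiam n
      have hDne : EMetric.diam (t n) ≠ ∞ := ne_top_of_le_ne_top ENNReal.ofReal_ne_top hDle
      rcases eq_or_lt_of_le (zero_le : 0 ≤ EMetric.diam (t n)) with hD0 | hDpos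
      · -- diameter zero
        have hzero : lam (t n ∩ S) = 0 := by
          refine hlim _ fun r hr hrle => ?_
          refine le_trans (measure_mono ?_) (hball z hzS r hr hrle)
          intro w hw
          have : edist w z ≤ EMetric.diam (t n) := EMetric.edist_le_diam_of_mem hw.1 hzt
          rw [← hD0] at this
          have hwz : w = z := by
            simpa [edist_eq_zero] using le_antisymm this zero_le
          simp [hwz, mem_closedBall_self hr.le]
        simp [hzero]
      · -- positive diameter
        set ρ := (EMetric.diam (t n)).toReal with hρ
        have hρpos : 0 < ρ := ENNReal.toReal_pos hDpos.ne' hDne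
        have hρle : ρ ≤ r0 := by
          rw [hρ]
          exact ENNReal.toReal_le_of_le_ofReal hr0.le hDle
        have hsub : t n ∩ S ⊆ closedBall z ρ := by
          intro w hw
          have h1 : edist w z ≤ EMetric.diam (t n) := EMetric.edist_le_diam_of_mem hw.1 hzt
          have : dist w z ≤ ρ := by
            rw [dist_edist, hρ]
            exact ENNReal.toReal_mono hDne h1
          exact this
        refine (measure_mono hsub).trans ((hball z hzS ρ hρpos hρle).trans ?_)
        rw [hρ, ENNReal.ofReal_toReal hDne]
    have hsub2 : S ⊆ ⋃ n, t n ∩ S := by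
      intro z hz
      obtain ⟨n, hn⟩ := Set.mem_iUnion.1 (hcov hz)
      exact Set.mem_iUnion.2 ⟨n, Set.mem_inter hn hz⟩
    calc lam S / c ≤ lam (⋃ n, t n ∩ S) / c :=
          ENNReal.div_le_div_right (measure_mono hsub2) c
      _ ≤ (∑' n, lam (t n ∩ S)) / c :=
          ENNReal.div_le_div_right (measure_iUnion_le _) c
      _ ≤ (∑' n, c * ⨆ _ : (t n).Nonempty, EMetric.diam (t n) ^ (d : ℝ)) / c :=
          ENNReal.div_le_div_right (ENNReal.tsum_le_tsum hkey) c
      _ = (c * ∑' n, ⨆ _ : (t n).Nonempty, EMetric.diam (t n) ^ (d : ℝ)) / c := by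
          rw [ENNReal.tsum_mul_left]
      _ ≤ ∑' n, ⨆ _ : (t n).Nonempty, EMetric.diam (t n) ^ (d : ℝ) := by
          rcases eq_or_ne c 0 with rfl | hc0
          · simp
          · rw [mul_comm, mul_div_assoc, ENNReal.div_self hc0 hc, mul_one]
  intro h0
  rw [h0] at hmain
  have : lam S / c = 0 := le_antisymm (by simpa using hmain) zero_le
  rw [ENNReal.div_eq_zero_iff] at this
  exact this.elim hS hc

end Mass

/-- For locally finite Borel measures `μ` on `X` and `ν` on `Y`, the product measure on
`X × Y` (with the max metric, which is the product metric) satisfies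
`dim_*(μ ⊗ ν) ≥ dim_* μ + dim_* ν`. -/
theorem stmt_11 {X Y : Type*} [MetricSpace X] [CompleteSpace X] [SecondCountableTopology X]
    [MeasurableSpace X] [BorelSpace X]
    [MetricSpace Y] [CompleteSpace Y] [SecondCountableTopology Y]
    [MeasurableSpace Y] [BorelSpace Y]
    (μ : Measure X) (ν : Measure Y) [IsLocallyFiniteMeasure μ] [IsLocallyFiniteMeasure ν]
    (hμ : μ ≠ 0) (hν : ν ≠ 0) :
    lowerDim (μ.prod ν) ≥ lowerDim μ + lowerDim ν := by
  rw [ge_iff_le, lowerDim]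
  refine le_iInf fun A => le_iInf fun hA => le_iInf fun hApos => ?_
  -- the main claim for fixed exponents
  have key : ∀ s t : ℝ≥0, ((s : ℝ≥0∞) < lowerDim μ ∨ s = 0) →
      ((t : ℝ≥0∞) < lowerDim ν ∨ t = 0) → (s : ℝ≥0∞) + t ≤ dimH A := by
    intro s t hs ht
    rcases eq_or_lt_of_le (zero_le : 0 ≤ s + t) with hst0 | hstpos
    · have hs0 : s = 0 ∧ t = 0 := by
        constructor <;> [skip; skip] <;>
          · have := hst0.symm
            simp [add_eq_zero] at this
            simp [this]
      rw [hs0.1, hs0.2]; simpa using zero_le (dimH A)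
    -- bad sets are null
    obtain ⟨NX, hNXsub, hNXm, hNX0⟩ :=
      exists_measurable_superset_of_null (good_ae μ hs)
    obtain ⟨NY, hNYsub, hNYm, hNY0⟩ :=
      exists_measurable_superset_of_null (good_ae ν ht)
    set lam := μ.prod ν with hlam
    have hnull : lam (NX ×ˢ (Set.univ : Set Y) ∪ (Set.univ : Set X) ×ˢ NY) = 0 := by
      refine measure_union_null ?_ ?_
      · rw [hlam, Measure.prod_prod, hNX0, zero_mul]
      · rw [hlam, Measure.prod_prod, hNY0, mul_zero]
    set A' := A \ (NX ×ˢ (Set.univ : Set Y) ∪ (Set.univ : Set X) ×ˢ NY) with hA'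
    have hA'pos : 0 < lam A' := by
      rw [hA', measure_diff_null hnull]; exact hApos
    -- decompose A' according to goodness parameters
    have hsubU : A' ⊆ ⋃ p : ℕ × ℕ × ℕ × ℕ,
        A' ∩ (goodAt μ (s : ℝ) p.1 p.2.1 ×ˢ goodAt ν (t : ℝ) p.2.2.1 p.2.2.2) := by
      rintro ⟨x, y⟩ hz
      have hxNX : x ∉ NX := fun hx => hz.2 (Or.inl ⟨hx, Set.mem_univ y⟩)
      have hyNY : y ∉ NY := fun hy => hz.2 (Or.inr ⟨Set.mem_univ x, hy⟩)
      have hxg : ¬ (∀ n m : ℕ, x ∉ goodAt μ (s : ℝ) n m) := fun h => hxNX (hNXsub h)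
      have hyg : ¬ (∀ n m : ℕ, y ∉ goodAt ν (t : ℝ) n m) := fun h => hyNY (hNYsub h)
      push_neg at hxg hyg
      obtain ⟨n, m, hxm⟩ := hxg
      obtain ⟨n', m', hym⟩ := hyg
      exact Set.mem_iUnion.2 ⟨⟨n, m, n', m'⟩, hz, hxm, hym⟩
    have hexists : ∃ p : ℕ × ℕ × ℕ × ℕ,
        lam (A' ∩ (goodAt μ (s : ℝ) p.1 p.2.1 ×ˢ goodAt ν (t : ℝ) p.2.2.1 p.2.2.2)) ≠ 0 := by
      by_contra h
      push_neg at h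
      have : lam A' = 0 := by
        refine le_antisymm (le_trans (measure_mono hsubU)
          (le_trans (measure_iUnion_le _) ?_)) zero_le
        simp [h]
      exact hA'pos.ne' this
    obtain ⟨⟨n, m, n', m'⟩, hSpos⟩ := hexists
    set S := A' ∩ (goodAt μ (s : ℝ) n m ×ˢ goodAt ν (t : ℝ) n' m') with hS
    -- mass bound on small balls centered in S
    have hball : ∀ z ∈ S, ∀ r : ℝ, 0 < r → r ≤ min (1 / ((n:ℝ) + 1)) (1 / ((n':ℝ) + 1)) →
        lam (closedBall z r) ≤ ((m : ℝ≥0∞) + 1) * ((m' : ℝ≥0∞) + 1) *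
          ENNReal.ofReal r ^ ((s + t : ℝ≥0) : ℝ) := by
      rintro ⟨x, y⟩ hz r hr0 hrle
      have hxg : x ∈ goodAt μ (s : ℝ) n m := hz.2.1
      have hyg : y ∈ goodAt ν (t : ℝ) n' m' := hz.2.2
      have hbx := hxg r hr0 (hrle.trans (min_le_left _ _))
      have hby := hyg r hr0 (hrle.trans (min_le_right _ _))
      have hballeq : closedBall ((x, y) : X × Y) r = closedBall x r ×ˢ closedBall y r :=
        (closedBall_prod_same x y r).symm
      rw [hballeq, hlam, Measure.prod_prod]
      have hR0 : ENNReal.ofReal r ≠ 0 := (ENNReal.ofReal_pos.2 hr0).ne'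
      have hRtop : ENNReal.ofReal r ≠ ∞ := ENNReal.ofReal_ne_top
      calc μ (closedBall x r) * ν (closedBall y r)
          ≤ ((m : ℝ≥0∞) * ENNReal.ofReal r ^ (s : ℝ)) *
            ((m' : ℝ≥0∞) * ENNReal.ofReal r ^ (t : ℝ)) := by gcongr
        _ = ((m : ℝ≥0∞) * m') * (ENNReal.ofReal r ^ (s : ℝ) * ENNReal.ofReal r ^ (t : ℝ)) := by
            ring
        _ = ((m : ℝ≥0∞) * m') * ENNReal.ofReal r ^ ((s : ℝ) + (t : ℝ)) := by
            rw [ENNReal.rpow_add _ _ hR0 hRtop]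
        _ ≤ ((m : ℝ≥0∞) + 1) * ((m' : ℝ≥0∞) + 1) * ENNReal.ofReal r ^ ((s + t : ℝ≥0) : ℝ) := by
            push_cast
            gcongr <;> simp
    have hdim : ((s + t : ℝ≥0) : ℝ≥0∞) ≤ dimH S := by
      refine le_dimH_of_massbound lam S (s + t) hstpos
        (((m : ℝ≥0∞) + 1) * ((m' : ℝ≥0∞) + 1))
        (ENNReal.mul_ne_top (by simp) (by simp))
        (min (1 / ((n:ℝ) + 1)) (1 / ((n':ℝ) + 1))) (lt_min (by positivity) (by positivity))
        hball hSpos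
    have hSA : S ⊆ A := (Set.inter_subset_left).trans Set.diff_subset
    calc (s : ℝ≥0∞) + t = ((s + t : ℝ≥0) : ℝ≥0∞) := by push_cast; ring
      _ ≤ dimH S := hdim
      _ ≤ dimH A := dimH_mono hSA
  -- assemble: represent each lowerDim as a supremum
  have hrep : ∀ a : ℝ≥0∞,
      a = ⨆ q : {q : ℝ≥0 // (q : ℝ≥0∞) < a ∨ q = 0}, ((q : ℝ≥0) : ℝ≥0∞) := by
    intro a
    refine le_antisymm ?_ (iSup_le fun q => ?_)
    · rcases eq_or_ne a 0 with rfl | ha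
      · exact zero_le
      · refine le_of_forall_lt fun cc hcc => ?_
        obtain ⟨q, hq1, hq2⟩ := ENNReal.lt_iff_exists_nnreal_btwn.1 hcc
        exact lt_of_lt_of_le hq1 (le_iSup (fun q : {q : ℝ≥0 // (q : ℝ≥0∞) < a ∨ q = 0} =>
          ((q : ℝ≥0) : ℝ≥0∞)) ⟨q, Or.inl hq2⟩)
    · rcases q.2 with h | h
      · exact h.le
      · simp [h]
  haveI hne1 : Nonempty {q : ℝ≥0 // (q : ℝ≥0∞) < lowerDim μ ∨ q = 0} := ⟨⟨0, Or.inr rfl⟩⟩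
  haveI hne2 : Nonempty {q : ℝ≥0 // (q : ℝ≥0∞) < lowerDim ν ∨ q = 0} := ⟨⟨0, Or.inr rfl⟩⟩
  calc lowerDim μ + lowerDim ν
      = (⨆ q : {q : ℝ≥0 // (q : ℝ≥0∞) < lowerDim μ ∨ q = 0}, ((q : ℝ≥0) : ℝ≥0∞)) +
        (⨆ q : {q : ℝ≥0 // (q : ℝ≥0∞) < lowerDim ν ∨ q = 0}, ((q : ℝ≥0) : ℝ≥0∞)) := by
        rw [← hrep, ← hrep]
    _ ≤ dimH A := by
        rw [ENNReal.iSup_add]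
        refine iSup_le fun i => ?_
        rw [ENNReal.add_iSup]
        exact iSup_le fun j => key i j i.2 j.2
end

section
/- For Borel probability measures μ, ν on ℝ^d, the convolution satisfies dim_*(μ * ν) ≥ max(dim_* μ, dim_* ν). -/
open MeasureTheory
open scoped ENNReal

lemma lowerDim_conv_right {d : ℕ} (μ ν : Measure (EuclideanSpace ℝ (Fin d)))
    [IsProbabilityMeasure μ] [IsProbabilityMeasure ν] :
    lowerDim ν ≤ lowerDim (μ.conv ν) := by
  refine le_iInf fun A => le_iInf fun hA => le_iInf fun hpos => ?_
  have hmap : (μ.conv ν) A = ∫⁻ x, ν ((x + ·) ⁻¹' A) ∂μ := by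
    rw [Measure.conv, Measure.map_apply (by fun_prop) hA,
      Measure.prod_apply (measurable_add hA)]
    rfl
  obtain ⟨x, hx⟩ : ∃ x, 0 < ν ((x + ·) ⁻¹' A) := by
    by_contra h
    push_neg at h
    have : (μ.conv ν) A = 0 := by
      rw [hmap]
      simp only [nonpos_iff_eq_zero] at h
      simp [h]
    exact absurd this hpos.ne'
  have hB : MeasurableSet ((x + ·) ⁻¹' A) := hA.preimage (by fun_prop)
  have hle : lowerDim ν ≤ dimH ((x + ·) ⁻¹' A) := by
    exact iInf_le_of_le _ (iInf_le_of_le hB (iInf_le _ hx))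
  have hdim : dimH ((x + ·) ⁻¹' A) = dimH A := by
    have heq : ((x + ·) ⁻¹' A) = ((-x) + ·) '' A := by
      ext y
      simp only [Set.mem_preimage, Set.mem_image]
      constructor
      · intro hy; exact ⟨x + y, hy, by abel⟩
      · rintro ⟨z, hz, rfl⟩
        simpa [add_comm, add_assoc, add_left_comm] using hz
    rw [heq, (isometry_add_left (-x)).dimH_image]
  rw [hdim] at hle
  exact hle

/-- For Borel probability measures `μ, ν` on `ℝ^d`, the convolution satisfies
`dim_*(μ * ν) ≥ max(dim_* μ, dim_* ν)`. -/
theorem stmt_12 (d : ℕ) (μ ν : Measure (EuclideanSpace ℝ (Fin d)))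
    [IsProbabilityMeasure μ] [IsProbabilityMeasure ν] :
    lowerDim (μ.conv ν) ≥ max (lowerDim μ) (lowerDim ν) := by
  refine max_le ?_ (lowerDim_conv_right μ ν)
  rw [Measure.conv_comm]
  exact lowerDim_conv_right ν μ
end
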